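/- Let ν ≥ 0 and δ ≥ 0. Then for every measurable function h : ℝ → [0,∞) vanishing on (−∞,0) and every t ≥ 0: ∫₀ᵗ e^{νs} (∫_{s−1}^{s} (s + δ − s')^{−1/2} h(s') ds')² ds ≤ 4 e^{ν} ∫₀ᵗ e^{νs'} h(s')² ds'. -/

import Mathlib

open MeasureTheory
open scoped ENNReal

section helpers

lemma mass_core (δ : ℝ) (hδ : 0 ≤ δ) :
    ENNReal.ofReal (∫ y in δ..(δ+1), y ^ (-(1/2) : ℝ)) ≤ 2 := by
  rw [integral_rpow (Or.inl (by norm_num))]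
  have e1 : -(1/2 : ℝ) + 1 = 1/2 := by norm_num
  rw [e1, ← Real.sqrt_eq_rpow, ← Real.sqrt_eq_rpow]
  have h1 : Real.sqrt (δ+1) ≤ Real.sqrt δ + 1 := by
    nlinarith [Real.sq_sqrt hδ, Real.sq_sqrt (by linarith : (0:ℝ) ≤ δ + 1),
      Real.sqrt_nonneg δ, Real.sqrt_nonneg (δ+1)]
  have h2 : (Real.sqrt (δ+1) - Real.sqrt δ) / (1/2) ≤ 2 := by
    rw [div_le_iff₀ (by norm_num)]; linarith
  calc ENNReal.ofReal ((Real.sqrt (δ+1) - Real.sqrt δ) / (1/2))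
      ≤ ENNReal.ofReal 2 := ENNReal.ofReal_le_ofReal h2
    _ = 2 := by norm_num

lemma mass1 (δ b : ℝ) (hδ : 0 ≤ δ) :
    ∫⁻ x in Set.Ioc (b-1) b, ENNReal.ofReal ((b + δ - x) ^ (-(1/2) : ℝ)) ≤ 2 := by
  have hi0 : IntervalIntegrable (fun y : ℝ => y ^ (-(1/2) : ℝ)) volume (δ+1) δ :=
    intervalIntegral.intervalIntegrable_rpow' (by norm_num)
  have hi : IntervalIntegrable (fun x : ℝ => ((b+δ) - x) ^ (-(1/2) : ℝ)) volume (b-1) b := by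
    have := hi0.comp_sub_left (b+δ)
    have e1 : b + δ - (δ+1) = b - 1 := by ring
    have e2 : b + δ - δ = b := by ring
    rwa [e1, e2] at this
  have hnn : ∀ x ∈ Set.Ioc (b-1) b, 0 ≤ (b + δ - x) ^ (-(1/2) : ℝ) := by
    intro x hx
    exact Real.rpow_nonneg (by cases hx; linarith) _
  rw [← ofReal_integral_eq_lintegral_ofReal hi.1
    (Filter.Eventually.mono (ae_restrict_mem measurableSet_Ioc) hnn)]
  have e3 : ∫ x in Set.Ioc (b-1) b, (b + δ - x) ^ (-(1/2) : ℝ)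
      = ∫ x in (b-1)..b, ((b+δ) - x) ^ (-(1/2) : ℝ) := by
    rw [intervalIntegral.integral_of_le (by linarith)]
  rw [e3, intervalIntegral.integral_comp_sub_left (fun y : ℝ => y ^ (-(1/2) : ℝ)) (b+δ)]
  have e4 : b + δ - b = δ := by ring
  have e5 : b + δ - (b-1) = δ + 1 := by ring
  rw [e4, e5]
  exact mass_core δ hδ

lemma mass2 (δ c : ℝ) (hδ : 0 ≤ δ) :
    ∫⁻ s in Set.Ico c (c+1), ENNReal.ofReal ((s + δ - c) ^ (-(1/2) : ℝ)) ≤ 2 := by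
  rw [Measure.restrict_congr_set Ico_ae_eq_Ioc]
  have hi0 : IntervalIntegrable (fun y : ℝ => y ^ (-(1/2) : ℝ)) volume δ (δ+1) :=
    intervalIntegral.intervalIntegrable_rpow' (by norm_num)
  have hi : IntervalIntegrable (fun s : ℝ => (s - (c - δ)) ^ (-(1/2) : ℝ)) volume c (c+1) := by
    have := hi0.comp_sub_right (c - δ)
    have e1 : δ + (c - δ) = c := by ring
    have e2 : δ + 1 + (c - δ) = c + 1 := by ring
    rwa [e1, e2] at this
  have hi' : IntervalIntegrable (fun s : ℝ => (s + δ - c) ^ (-(1/2) : ℝ)) volume c (c+1) := by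
    simpa [sub_sub_eq_add_sub, add_sub_assoc] using hi
  have hnn : ∀ s ∈ Set.Ioc c (c+1), 0 ≤ (s + δ - c) ^ (-(1/2) : ℝ) := by
    intro s hs
    exact Real.rpow_nonneg (by cases hs; linarith) _
  rw [← ofReal_integral_eq_lintegral_ofReal hi'.1
    (Filter.Eventually.mono (ae_restrict_mem measurableSet_Ioc) hnn)]
  have e3 : ∫ s in Set.Ioc c (c+1), (s + δ - c) ^ (-(1/2) : ℝ)
      = ∫ s in c..(c+1), (fun y : ℝ => y ^ (-(1/2) : ℝ)) (s - (c - δ)) := by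
    rw [intervalIntegral.integral_of_le (by linarith)]
    refine setIntegral_congr_fun measurableSet_Ioc (fun s _ => ?_)
    have : s + δ - c = s - (c - δ) := by ring
    rw [this]
  rw [e3, intervalIntegral.integral_comp_sub_right (fun y : ℝ => y ^ (-(1/2) : ℝ)) (c - δ)]
  have e4 : c - (c - δ) = δ := by ring
  have e5 : c + 1 - (c - δ) = δ + 1 := by ring
  rw [e4, e5]
  exact mass_core δ hδ

lemma cs_step (δ : ℝ) (hδ : 0 ≤ δ) (h : ℝ → ℝ) (hmeas : Measurable h)
    (hnonneg : ∀ s, 0 ≤ h s) (s : ℝ)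
    (hmass : ∫⁻ x in Set.Ioc (s-1) s, ENNReal.ofReal ((s + δ - x) ^ (-(1/2) : ℝ)) ≤ 2) :
    (∫⁻ s' in Set.Ioc (s-1) s, ENNReal.ofReal ((s + δ - s') ^ (-(1/2) : ℝ) * h s'))^2
    ≤ 2 * ∫⁻ s' in Set.Ioc (s-1) s,
        ENNReal.ofReal ((s + δ - s') ^ (-(1/2) : ℝ)) * ENNReal.ofReal ((h s')^2) := by
  set K : ℝ → ℝ≥0∞ := fun s' => ENNReal.ofReal ((s + δ - s') ^ (-(1/2) : ℝ)) with hK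
  have hKmeas : Measurable K :=
    ((measurable_const.sub measurable_id).pow measurable_const).ennreal_ofReal
  set f : ℝ → ℝ≥0∞ := fun s' => K s' ^ ((1:ℝ)/2) with hf
  set g : ℝ → ℝ≥0∞ := fun s' => K s' ^ ((1:ℝ)/2) * ENNReal.ofReal (h s') with hg
  have hfmeas : Measurable f := hKmeas.pow measurable_const
  have hgmeas : Measurable g := (hKmeas.pow measurable_const).mul hmeas.ennreal_ofReal
  have sqhalf : ∀ x : ℝ≥0∞, x ^ ((1:ℝ)/2) * x ^ ((1:ℝ)/2) = x := by
    intro x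
    rw [← ENNReal.rpow_add_of_nonneg _ _ (by norm_num) (by norm_num)]
    norm_num
  have key : ∀ s' ∈ Set.Ioc (s-1) s,
      ENNReal.ofReal ((s + δ - s') ^ (-(1/2) : ℝ) * h s') = f s' * g s' := by
    intro s' hs'
    have hknn : 0 ≤ (s + δ - s') ^ (-(1/2) : ℝ) :=
      Real.rpow_nonneg (by rcases Set.mem_Ioc.mp hs' with ⟨_, h2⟩; linarith) _
    rw [ENNReal.ofReal_mul hknn, hf, hg]
    simp only
    rw [← mul_assoc, sqhalf]
  have conj : (2:ℝ).HolderConjugate 2 := Real.HolderConjugate.two_two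
  have H := ENNReal.lintegral_mul_le_Lp_mul_Lq (volume.restrict (Set.Ioc (s-1) s)) conj
    hfmeas.aemeasurable hgmeas.aemeasurable
  have e1 : ∫⁻ s' in Set.Ioc (s-1) s, ENNReal.ofReal ((s + δ - s') ^ (-(1/2) : ℝ) * h s')
      = ∫⁻ s' in Set.Ioc (s-1) s, (f * g) s' :=
    setLIntegral_congr_fun measurableSet_Ioc key
  rw [e1]
  have sqrt_sq : ∀ x : ℝ≥0∞, (x ^ ((1:ℝ)/2)) ^ (2:ℕ) = x := by
    intro x
    rw [← ENNReal.rpow_natCast (x ^ ((1:ℝ)/2)) 2, ← ENNReal.rpow_mul]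
    norm_num
  calc (∫⁻ s' in Set.Ioc (s-1) s, (f * g) s') ^ (2:ℕ)
      ≤ ((∫⁻ s' in Set.Ioc (s-1) s, f s' ^ (2:ℝ)) ^ ((1:ℝ)/2)
          * (∫⁻ s' in Set.Ioc (s-1) s, g s' ^ (2:ℝ)) ^ ((1:ℝ)/2)) ^ (2:ℕ) := by
        gcongr
    _ = (∫⁻ s' in Set.Ioc (s-1) s, f s' ^ (2:ℝ))
          * (∫⁻ s' in Set.Ioc (s-1) s, g s' ^ (2:ℝ)) := by
        rw [mul_pow, sqrt_sq, sqrt_sq]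
    _ = (∫⁻ s' in Set.Ioc (s-1) s, K s')
          * (∫⁻ s' in Set.Ioc (s-1) s, K s' * ENNReal.ofReal ((h s')^2)) := by
        congr 1
        · refine lintegral_congr fun s' => ?_
          rw [hf]; simp only
          rw [← ENNReal.rpow_mul]
          norm_num
        · refine lintegral_congr fun s' => ?_
          rw [hg]; simp only
          rw [ENNReal.mul_rpow_of_nonneg _ _ (by norm_num : (0:ℝ) ≤ 2)]
          congr 1
          · rw [← ENNReal.rpow_mul]; norm_num
          · rw [ENNReal.ofReal_rpow_of_nonneg (hnonneg s') (by norm_num : (0:ℝ) ≤ 2)]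
            norm_num [Real.rpow_natCast]
    _ ≤ 2 * (∫⁻ s' in Set.Ioc (s-1) s, K s' * ENNReal.ofReal ((h s')^2)) :=
        mul_le_mul_left hmass _

end helpers

/-- the weighted convolution estimate for the short-time kernel
`(s + δ − s')^{-1/2}`.  Both sides live in the extended reals. -/
theorem statement19 (ν δ : ℝ) (hν : 0 ≤ ν) (hδ : 0 ≤ δ)
    (h : ℝ → ℝ) (hmeas : Measurable h) (hnonneg : ∀ s, 0 ≤ h s)
    (hvanish : ∀ s < (0:ℝ), h s = 0)
    (t : ℝ) (ht : 0 ≤ t) :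
    (∫⁻ s in Set.Ioc (0:ℝ) t, ENNReal.ofReal (Real.exp (ν*s)) *
        (∫⁻ s' in Set.Ioc (s-1) s,
          ENNReal.ofReal ((s + δ - s') ^ (-(1/2) : ℝ) * h s'))^2)
    ≤ ENNReal.ofReal (4 * Real.exp ν) *
        ∫⁻ s' in Set.Ioc (0:ℝ) t, ENNReal.ofReal (Real.exp (ν*s') * (h s')^2) := by
  classical
  set F : ℝ × ℝ → ℝ≥0∞ := fun p => ENNReal.ofReal (Real.exp (ν*p.1)) *
    (ENNReal.ofReal ((p.1 + δ - p.2) ^ (-(1/2) : ℝ)) * ENNReal.ofReal ((h p.2)^2)) with hF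
  set S : Set (ℝ × ℝ) := {p | (0 < p.1 ∧ p.1 ≤ t) ∧ (p.1 - 1 < p.2 ∧ p.2 ≤ p.1)} with hSdef
  have hFmeas : Measurable F := by
    refine Measurable.fun_mul ?_ (Measurable.fun_mul ?_ ?_)
    · exact ((measurable_fst.const_mul ν).exp).ennreal_ofReal
    · exact (((measurable_fst.add_const δ).sub measurable_snd).pow
        measurable_const).ennreal_ofReal
    · exact ((hmeas.comp measurable_snd).pow measurable_const).ennreal_ofReal
  have hS : MeasurableSet S := by
    have h1 : MeasurableSet {p : ℝ×ℝ | 0 < p.1} :=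
      measurableSet_lt measurable_const measurable_fst
    have h2 : MeasurableSet {p : ℝ×ℝ | p.1 ≤ t} :=
      measurableSet_le measurable_fst measurable_const
    have h3 : MeasurableSet {p : ℝ×ℝ | p.1 - 1 < p.2} :=
      measurableSet_lt (measurable_fst.sub measurable_const) measurable_snd
    have h4 : MeasurableSet {p : ℝ×ℝ | p.2 ≤ p.1} :=
      measurableSet_le measurable_snd measurable_fst
    exact (h1.inter h2).inter (h3.inter h4)
  have memS : ∀ a b : ℝ, ((a,b) ∈ S) ↔ ((0 < a ∧ a ≤ t) ∧ (a - 1 < b ∧ b ≤ a)) :=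
    fun a b => Iff.rfl
  -- Step 1: Cauchy–Schwarz on the inner integral
  have step1 : (∫⁻ s in Set.Ioc (0:ℝ) t, ENNReal.ofReal (Real.exp (ν*s)) *
        (∫⁻ s' in Set.Ioc (s-1) s,
          ENNReal.ofReal ((s + δ - s') ^ (-(1/2) : ℝ) * h s'))^2)
      ≤ ∫⁻ s in Set.Ioc (0:ℝ) t, ENNReal.ofReal (Real.exp (ν*s)) *
        (2 * ∫⁻ s' in Set.Ioc (s-1) s,
          ENNReal.ofReal ((s + δ - s') ^ (-(1/2) : ℝ)) * ENNReal.ofReal ((h s')^2)) :=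
    lintegral_mono fun s =>
      mul_le_mul_right (cs_step δ hδ h hmeas hnonneg s (mass1 δ s hδ)) _
  -- Step 2: rewrite as a double integral of F
  have step2 : (∫⁻ s in Set.Ioc (0:ℝ) t, ENNReal.ofReal (Real.exp (ν*s)) *
        (2 * ∫⁻ s' in Set.Ioc (s-1) s,
          ENNReal.ofReal ((s + δ - s') ^ (-(1/2) : ℝ)) * ENNReal.ofReal ((h s')^2)))
      = 2 * ∫⁻ s in Set.Ioc (0:ℝ) t, ∫⁻ s' in Set.Ioc (s-1) s, F (s, s') := by
    rw [← lintegral_const_mul' 2 _ (by norm_num : (2:ℝ≥0∞) ≠ ⊤)]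
    refine lintegral_congr fun s => ?_
    rw [mul_left_comm]
    congr 1
    rw [← lintegral_const_mul' _ _ ENNReal.ofReal_ne_top]
  -- Step 3: indicator form and Tonelli
  have eq_ind : ∀ s : ℝ, (∫⁻ s', S.indicator F (s, s'))
      = (Set.Ioc (0:ℝ) t).indicator
          (fun s => ∫⁻ s' in Set.Ioc (s-1) s, F (s, s')) s := by
    intro s
    by_cases hs : s ∈ Set.Ioc (0:ℝ) t
    · rw [Set.indicator_of_mem hs, ← lintegral_indicator measurableSet_Ioc]
      refine lintegral_congr fun s' => ?_
      rcases Set.mem_Ioc.mp hs with ⟨hs1, hs2⟩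
      by_cases hs' : s' ∈ Set.Ioc (s-1) s
      · rcases Set.mem_Ioc.mp hs' with ⟨h1', h2'⟩
        rw [Set.indicator_of_mem ((memS s s').mpr ⟨⟨hs1, hs2⟩, ⟨h1', h2'⟩⟩) F,
          Set.indicator_of_mem hs']
      · rw [Set.indicator_of_notMem hs', Set.indicator_of_notMem]
        intro hmem
        exact hs' (Set.mem_Ioc.mpr ⟨((memS s s').mp hmem).2.1, ((memS s s').mp hmem).2.2⟩)
    · rw [Set.indicator_of_notMem hs]
      have hz : ∀ s', S.indicator F (s, s') = 0 := by
        intro s'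
        refine Set.indicator_of_notMem (fun hmem => hs (Set.mem_Ioc.mpr
          ⟨((memS s s').mp hmem).1.1, ((memS s s').mp hmem).1.2⟩)) _
      simp [hz]
  have step3 : (∫⁻ s in Set.Ioc (0:ℝ) t, ∫⁻ s' in Set.Ioc (s-1) s, F (s, s'))
      = ∫⁻ s', ∫⁻ s, S.indicator F (s, s') := by
    rw [← lintegral_indicator measurableSet_Ioc]
    rw [← lintegral_congr eq_ind]
    exact lintegral_lintegral_swap ((hFmeas.indicator hS).aemeasurable)
  -- Step 4: a.e. bound of the inner s-integral
  have step4 : (∫⁻ s', ∫⁻ s, S.indicator F (s, s'))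
      ≤ ∫⁻ s', (Set.Ioc (0:ℝ) t).indicator
          (fun s' => 2 * ENNReal.ofReal (Real.exp ν * (Real.exp (ν*s') * (h s')^2))) s' := by
    have hane : ∀ᵐ s' : ℝ, s' ≠ 0 := by
      refine ae_iff.mpr ?_
      simp [Set.setOf_eq_eq_singleton']
    refine lintegral_mono_ae (hane.mono fun s' hne => ?_)
    by_cases hs' : s' ∈ Set.Ioc (0:ℝ) t
    · rw [Set.indicator_of_mem hs']
      rcases Set.mem_Ioc.mp hs' with ⟨hs1, hs2⟩
      have ind_le : ∀ s, S.indicator F (s, s')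
          ≤ (Set.Ico s' (s'+1)).indicator (fun s => F (s, s')) s := by
        intro s
        by_cases hm : (s, s') ∈ S
        · rcases (memS s s').mp hm with ⟨⟨hm1, hm2⟩, ⟨hm3, hm4⟩⟩
          rw [Set.indicator_of_mem hm,
            Set.indicator_of_mem (Set.mem_Ico.mpr ⟨hm4, by linarith⟩)]
        · rw [Set.indicator_of_notMem hm]
          exact zero_le
      calc (∫⁻ s, S.indicator F (s, s'))
          ≤ ∫⁻ s, (Set.Ico s' (s'+1)).indicator (fun s => F (s, s')) s :=
            lintegral_mono ind_le
        _ = ∫⁻ s in Set.Ico s' (s'+1), F (s, s') :=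
            lintegral_indicator measurableSet_Ico _
        _ ≤ ∫⁻ s in Set.Ico s' (s'+1), ENNReal.ofReal (Real.exp (ν*(s'+1))) *
              (ENNReal.ofReal ((s + δ - s') ^ (-(1/2) : ℝ)) *
                ENNReal.ofReal ((h s')^2)) := by
            refine setLIntegral_mono' measurableSet_Ico (fun s hs => ?_)
            refine mul_le_mul_left (ENNReal.ofReal_le_ofReal ?_) _
            exact Real.exp_le_exp.2 (mul_le_mul_of_nonneg_left (Set.mem_Ico.mp hs).2.le hν)
        _ = ENNReal.ofReal (Real.exp (ν*(s'+1))) * (ENNReal.ofReal ((h s')^2) *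
              ∫⁻ s in Set.Ico s' (s'+1),
                ENNReal.ofReal ((s + δ - s') ^ (-(1/2) : ℝ))) := by
            rw [lintegral_const_mul' _ _ ENNReal.ofReal_ne_top]
            congr 1
            rw [← lintegral_const_mul' _ _ ENNReal.ofReal_ne_top]
            exact lintegral_congr fun s => mul_comm _ _
        _ ≤ ENNReal.ofReal (Real.exp (ν*(s'+1))) * (ENNReal.ofReal ((h s')^2) * 2) :=
            mul_le_mul_right (mul_le_mul_right (mass2 δ s' hδ) _) _
        _ = 2 * ENNReal.ofReal (Real.exp ν * (Real.exp (ν*s') * (h s')^2)) := by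
            rw [show ν*(s'+1) = ν + ν*s' by ring, Real.exp_add,
              ENNReal.ofReal_mul (Real.exp_nonneg ν),
              ENNReal.ofReal_mul (Real.exp_nonneg ν),
              ENNReal.ofReal_mul (Real.exp_nonneg (ν*s'))]
            ring
    · rw [Set.indicator_of_notMem hs']
      have hz : ∀ s, S.indicator F (s, s') = 0 := by
        intro s
        by_cases hm : (s, s') ∈ S
        · rcases (memS s s').mp hm with ⟨⟨hm1, hm2⟩, ⟨hm3, hm4⟩⟩
          rcases lt_or_ge s' 0 with hneg | hpos
          · rw [Set.indicator_of_mem hm, hF]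
            simp [hvanish s' hneg]
          · exfalso
            have h0 : 0 < s' := lt_of_le_of_ne hpos (Ne.symm hne)
            exact hs' (Set.mem_Ioc.mpr ⟨h0, le_trans hm4 hm2⟩)
        · exact Set.indicator_of_notMem hm _
      simp [hz]
  -- Step 5: evaluate the bound integral
  have step5 : (∫⁻ s', (Set.Ioc (0:ℝ) t).indicator
        (fun s' => 2 * ENNReal.ofReal (Real.exp ν * (Real.exp (ν*s') * (h s')^2))) s')
      = 2 * ENNReal.ofReal (Real.exp ν) *
          ∫⁻ s' in Set.Ioc (0:ℝ) t, ENNReal.ofReal (Real.exp (ν*s') * (h s')^2) := by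
    rw [lintegral_indicator measurableSet_Ioc]
    have hc : (2 * ENNReal.ofReal (Real.exp ν)) ≠ ⊤ :=
      ENNReal.mul_ne_top (by norm_num) ENNReal.ofReal_ne_top
    rw [← lintegral_const_mul' (2 * ENNReal.ofReal (Real.exp ν)) _ hc]
    refine lintegral_congr fun s' => ?_
    rw [ENNReal.ofReal_mul (Real.exp_nonneg ν)]
    ring
  calc (∫⁻ s in Set.Ioc (0:ℝ) t, ENNReal.ofReal (Real.exp (ν*s)) *
        (∫⁻ s' in Set.Ioc (s-1) s,
          ENNReal.ofReal ((s + δ - s') ^ (-(1/2) : ℝ) * h s'))^2)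
      ≤ 2 * ∫⁻ s in Set.Ioc (0:ℝ) t, ∫⁻ s' in Set.Ioc (s-1) s, F (s, s') :=
        step2 ▸ step1
    _ = 2 * ∫⁻ s', ∫⁻ s, S.indicator F (s, s') := by rw [step3]
    _ ≤ 2 * (2 * ENNReal.ofReal (Real.exp ν) *
          ∫⁻ s' in Set.Ioc (0:ℝ) t, ENNReal.ofReal (Real.exp (ν*s') * (h s')^2)) := by
        rw [← step5]
        exact mul_le_mul_right step4 _
    _ = ENNReal.ofReal (4 * Real.exp ν) *
          ∫⁻ s' in Set.Ioc (0:ℝ) t, ENNReal.ofReal (Real.exp (ν*s') * (h s')^2) := by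
        rw [ENNReal.ofReal_mul (by norm_num : (0:ℝ) ≤ 4)]
        rw [show ENNReal.ofReal (4:ℝ) = 4 by norm_num]
        ring
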